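/- arXiv:2105.04809 — 2 statements merged into one kernel-verified Lean document; each statement's English description precedes it below -/
import Mathlib

section
/- Let V₁, V₂, V₃ be pairwise disjoint finite vertex sets with |V₁| = |V₂| = a and |V₃| = k, and let w₁, …, w_k be an enumeration of V₃. Let G be the simple graph whose edges are: all pairs {u, w} with u ∈ V₁ and w ∈ V₃; all pairs {v, w} with v ∈ V₂ and w ∈ V₃; and the edges of k pairwise edge-disjoint perfect matchings M₁, …, M_k between V₁ and V₂. Then the triangles {u, v, w_i} over all i ∈ {1, …, k} and all edges {u, v} ∈ M_i form a family of a·k pairwise edge-disjoint triangles in G. -/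
open SimpleGraph

/-- The set of edges spanned by a triangle `t`: the non-diagonal unordered pairs
both of whose elements lie in `t`. -/
def triangleEdges {V : Type*} (t : Finset V) : Set (Sym2 V) :=
  {e | ¬ e.IsDiag ∧ ∀ v ∈ e, v ∈ t}

/-- The edge set of the lower-bound construction: all pairs between `V₁` and `V₃`, all
pairs between `V₂` and `V₃`, and, for each `i`, the edges `{u, M i u}` (`u ∈ V₁`) of
the `i`-th perfect matching between `V₁` and `V₂`. -/
def lowerBoundEdges {V : Type*} (V₁ V₂ V₃ : Finset V) {k : ℕ} (M : Fin k → V → V) :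
    Set (Sym2 V) :=
  {e | (∃ u ∈ V₁, ∃ w ∈ V₃, e = s(u, w)) ∨ (∃ v ∈ V₂, ∃ w ∈ V₃, e = s(v, w)) ∨
    (∃ i : Fin k, ∃ u ∈ V₁, e = s(u, M i u))}

/-- In the lower-bound construction (complete bipartite graphs between `V₁, V₃` and
`V₂, V₃`, plus `k` pairwise edge-disjoint perfect matchings `M i` between `V₁` and
`V₂`, where `|V₁| = |V₂| = a`, `|V₃| = k` with enumeration `w`), the triangles
`{u, M i u, w i}` over all `i` and all `u ∈ V₁` form a family of `a·k` pairwise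
edge-disjoint triangles. -/
theorem lower_bound_graph_edge_disjoint_triangles
    {V : Type*} [Fintype V] [DecidableEq V] (G : SimpleGraph V)
    (V₁ V₂ V₃ : Finset V) (a k : ℕ)
    (hd₁₂ : Disjoint V₁ V₂) (hd₁₃ : Disjoint V₁ V₃) (hd₂₃ : Disjoint V₂ V₃)
    (ha₁ : V₁.card = a) (ha₂ : V₂.card = a) (hk : V₃.card = k)
    (w : Fin k → V) (hwinj : Function.Injective w) (hwmem : ∀ i, w i ∈ V₃)
    (M : Fin k → V → V)
    (hM : ∀ i, Set.BijOn (M i) ↑V₁ ↑V₂)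
    (hMdisj : ∀ i j, i ≠ j → ∀ u ∈ V₁, M i u ≠ M j u)
    (hG : G.edgeSet = lowerBoundEdges V₁ V₂ V₃ M) :
    ∃ T : Finset (Finset V),
      T = Finset.image (fun p : Fin k × V => ({p.2, M p.1 p.2, w p.1} : Finset V))
        (Finset.univ ×ˢ V₁) ∧
      T.card = a * k ∧
      (∀ t ∈ T, G.IsNClique 3 t) ∧
      (∀ t₁ ∈ T, ∀ t₂ ∈ T, t₁ ≠ t₂ → Disjoint (triangleEdges t₁) (triangleEdges t₂)) := by
  classical
  have hMem : ∀ (i : Fin k) (u : V), u ∈ V₁ → M i u ∈ V₂ := fun i u hu => (hM i).mapsTo hu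
  have htype : ∀ (i : Fin k) (u : V), u ∈ V₁ → ∀ (j : Fin k) (v : V), v ∈ V₁ →
      ∀ x, x ∈ ({u, M i u, w i} : Finset V) → x ∈ ({v, M j v, w j} : Finset V) →
      (x = u ∧ x = v) ∨ (x = M i u ∧ x = M j v) ∨ (x = w i ∧ x = w j) := by
    intro i u hu j v hv x hx1 hx2
    have h1 := hMem i u hu
    have h2 := hMem j v hv
    simp only [Finset.mem_insert, Finset.mem_singleton] at hx1 hx2
    rcases hx1 with rfl | rfl | rfl <;> rcases hx2 with h | h | h
    · exact Or.inl ⟨rfl, h⟩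
    · exact absurd (h.symm ▸ h2) (Finset.disjoint_left.mp hd₁₂ hu)
    · exact absurd (h.symm ▸ hwmem j) (Finset.disjoint_left.mp hd₁₃ hu)
    · exact absurd (h ▸ h1) (Finset.disjoint_left.mp hd₁₂ hv)
    · exact Or.inr (Or.inl ⟨rfl, h⟩)
    · exact absurd (h.symm ▸ hwmem j) (Finset.disjoint_left.mp hd₂₃ h1)
    · exact absurd (h ▸ hwmem i) (Finset.disjoint_left.mp hd₁₃ hv)
    · exact absurd (h ▸ hwmem i) (Finset.disjoint_left.mp hd₂₃ (hMem j v hv))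
    · exact Or.inr (Or.inr ⟨rfl, h⟩)
  have key : ∀ (i : Fin k) (u : V), u ∈ V₁ → ∀ (j : Fin k) (v : V), v ∈ V₁ →
      ∀ x y : V, x ≠ y →
      x ∈ ({u, M i u, w i} : Finset V) → x ∈ ({v, M j v, w j} : Finset V) →
      y ∈ ({u, M i u, w i} : Finset V) → y ∈ ({v, M j v, w j} : Finset V) →
      i = j ∧ u = v := by
    intro i u hu j v hv x y hxy hx1 hx2 hy1 hy2
    rcases htype i u hu j v hv x hx1 hx2 with ⟨hxu, hxv⟩ | ⟨hxu, hxv⟩ | ⟨hxu, hxv⟩ <;>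
      rcases htype i u hu j v hv y hy1 hy2 with ⟨hyu, hyv⟩ | ⟨hyu, hyv⟩ | ⟨hyu, hyv⟩
    · exact absurd (hxu.trans hyu.symm) hxy
    · -- x type 1, y type 2
      have huv : u = v := hxu.symm.trans hxv
      subst huv
      have hMM : M i u = M j u := hyu.symm.trans hyv
      have hij : i = j := by
        by_contra h
        exact hMdisj i j h u hu hMM
      exact ⟨hij, rfl⟩
    · -- x type 1, y type 3
      exact ⟨hwinj (hyu.symm.trans hyv), hxu.symm.trans hxv⟩
    · -- x type 2, y type 1
      have huv : u = v := hyu.symm.trans hyv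
      subst huv
      have hMM : M i u = M j u := hxu.symm.trans hxv
      have hij : i = j := by
        by_contra h
        exact hMdisj i j h u hu hMM
      exact ⟨hij, rfl⟩
    · exact absurd (hxu.trans hyu.symm) hxy
    · -- x type 2, y type 3
      have hij : i = j := hwinj (hyu.symm.trans hyv)
      subst hij
      exact ⟨rfl, (hM i).injOn hu hv (hxu.symm.trans hxv)⟩
    · -- x type 3, y type 1
      exact ⟨hwinj (hxu.symm.trans hxv), hyu.symm.trans hyv⟩
    · -- x type 3, y type 2
      have hij : i = j := hwinj (hxu.symm.trans hxv)
      subst hij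
      exact ⟨rfl, (hM i).injOn hu hv (hyu.symm.trans hyv)⟩
    · exact absurd (hxu.trans hyu.symm) hxy
  have hne : ∀ (i : Fin k) (u : V), u ∈ V₁ →
      u ≠ M i u ∧ u ≠ w i ∧ M i u ≠ w i := by
    intro i u hu
    refine ⟨?_, ?_, ?_⟩
    · intro h; exact Finset.disjoint_left.mp hd₁₂ hu (h ▸ hMem i u hu)
    · intro h; exact Finset.disjoint_left.mp hd₁₃ hu (h ▸ hwmem i)
    · intro h; exact Finset.disjoint_left.mp hd₂₃ (hMem i u hu) (h ▸ hwmem i)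
  refine ⟨_, rfl, ?_, ?_, ?_⟩
  · -- cardinality
    rw [Finset.card_image_of_injOn, Finset.card_product, Finset.card_univ,
      Fintype.card_fin, ha₁, Nat.mul_comm]
    intro p hp q hq hpq
    simp only [Finset.coe_product, Set.mem_prod, Set.mem_univ, true_and, Finset.mem_coe] at hp hq
    obtain ⟨i, u⟩ := p
    obtain ⟨j, v⟩ := q
    have hp : u ∈ V₁ := hp.2
    have hq : v ∈ V₁ := hq.2
    have hpq : ({u, M i u, w i} : Finset V) = {v, M j v, w j} := hpq
    have huw : u ≠ w i := (hne i u hp).2.1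
    have hu2 : u ∈ ({v, M j v, w j} : Finset V) := by
      rw [← hpq]; exact Finset.mem_insert_self _ _
    have hw2 : w i ∈ ({v, M j v, w j} : Finset V) := by
      rw [← hpq]
      exact Finset.mem_insert_of_mem (Finset.mem_insert_of_mem (Finset.mem_singleton_self _))
    have hw1 : w i ∈ ({u, M i u, w i} : Finset V) :=
      Finset.mem_insert_of_mem (Finset.mem_insert_of_mem (Finset.mem_singleton_self _))
    obtain ⟨hij, huv⟩ := key i u hp j v hq u (w i) huw
      (Finset.mem_insert_self _ _) hu2 hw1 hw2
    exact Prod.ext hij huv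
  · -- cliques
    intro t ht
    simp only [Finset.mem_image, Finset.mem_product, Finset.mem_univ, true_and] at ht
    obtain ⟨⟨i, u⟩, hu, rfl⟩ := ht
    obtain ⟨h1, h2, h3⟩ := hne i u hu
    rw [SimpleGraph.is3Clique_triple_iff]
    refine ⟨?_, ?_, ?_⟩
    · rw [← SimpleGraph.mem_edgeSet, hG]
      exact Or.inr (Or.inr ⟨i, u, hu, rfl⟩)
    · rw [← SimpleGraph.mem_edgeSet, hG]
      exact Or.inl ⟨u, hu, w i, hwmem i, rfl⟩
    · rw [← SimpleGraph.mem_edgeSet, hG]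
      exact Or.inr (Or.inl ⟨M i u, hMem i u hu, w i, hwmem i, rfl⟩)
  · -- edge-disjointness
    intro t₁ ht₁ t₂ ht₂ hne12
    simp only [Finset.mem_image, Finset.mem_product, Finset.mem_univ, true_and] at ht₁ ht₂
    obtain ⟨⟨i, u⟩, hu, rfl⟩ := ht₁
    obtain ⟨⟨j, v⟩, hv, rfl⟩ := ht₂
    rw [Set.disjoint_left]
    rintro e ⟨hdiag, hmem1⟩ ⟨_, hmem2⟩
    induction e with
    | h x y =>
      have hxy : x ≠ y := by
        intro h; exact hdiag (by simp [h, Sym2.isDiag_iff_proj_eq])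
      have hx1 := hmem1 x (Sym2.mem_mk_left x y)
      have hy1 := hmem1 y (Sym2.mem_mk_right x y)
      have hx2 := hmem2 x (Sym2.mem_mk_left x y)
      have hy2 := hmem2 y (Sym2.mem_mk_right x y)
      obtain ⟨hij, huv⟩ := key i u hu j v hv x y hxy hx1 hx2 hy1 hy2
      subst hij; subst huv
      exact hne12 rfl
end

section
/- Let V₁, V₂, V₃ be pairwise disjoint finite vertex sets with |V₁| = |V₂| = a and |V₃| = k (a, k ≥ 1), and let G be the simple graph whose edge set consists exactly of: all pairs between V₁ and V₃, all pairs between V₂ and V₃, and the edges of k pairwise edge-disjoint perfect matchings between V₁ and V₂. Then G has exactly 3·a·k edges, contains a·k pairwise edge-disjoint triangles, and consequently G is (1/3)-far from being triangle-free: every set F of edges whose deletion makes G triangle-free satisfies |F| ≥ a·k, which is one third of the number of edges of G. -/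
open SimpleGraph

/-- The lower-bound construction graph (with `|V₁| = |V₂| = a ≥ 1`, `|V₃| = k ≥ 1`)
has exactly `3·a·k` edges, contains `a·k` pairwise edge-disjoint triangles, and is
`(1/3)`-far from being triangle-free: every set `F` of edges whose deletion makes the
graph triangle-free satisfies `|F| ≥ a·k`, one third of the number of edges. -/
theorem lower_bound_graph_far_from_triangle_free
    {V : Type*} [Fintype V] [DecidableEq V] (G : SimpleGraph V)
    (V₁ V₂ V₃ : Finset V) (a k : ℕ) (ha : 1 ≤ a) (hk1 : 1 ≤ k)
    (hd₁₂ : Disjoint V₁ V₂) (hd₁₃ : Disjoint V₁ V₃) (hd₂₃ : Disjoint V₂ V₃)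
    (ha₁ : V₁.card = a) (ha₂ : V₂.card = a) (hk : V₃.card = k)
    (M : Fin k → V → V)
    (hM : ∀ i, Set.BijOn (M i) ↑V₁ ↑V₂)
    (hMdisj : ∀ i j, i ≠ j → ∀ u ∈ V₁, M i u ≠ M j u)
    (hG : G.edgeSet = lowerBoundEdges V₁ V₂ V₃ M) :
    G.edgeSet.ncard = 3 * a * k ∧
    (∃ T : Finset (Finset V),
      T.card = a * k ∧
      (∀ t ∈ T, G.IsNClique 3 t) ∧
      (∀ t₁ ∈ T, ∀ t₂ ∈ T, t₁ ≠ t₂ → Disjoint (triangleEdges t₁) (triangleEdges t₂))) ∧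
    (∀ F : Set (Sym2 V), F ⊆ G.edgeSet → (G.deleteEdges F).CliqueFree 3 →
      a * k ≤ F.ncard) ∧
    (a * k : ℝ) = (1 / 3) * (G.edgeSet.ncard : ℝ) := by
  classical
  -- basic disjointness consequences
  have h12 : ∀ x ∈ V₁, x ∉ V₂ := fun x hx => Finset.disjoint_left.mp hd₁₂ hx
  have h13 : ∀ x ∈ V₁, x ∉ V₃ := fun x hx => Finset.disjoint_left.mp hd₁₃ hx
  have h23 : ∀ x ∈ V₂, x ∉ V₃ := fun x hx => Finset.disjoint_left.mp hd₂₃ hx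
  -- enumeration of V₃
  set w : Fin k → V := fun i => ((V₃.equivFinOfCardEq hk).symm i : V) with hwdef
  have hwmem : ∀ i, w i ∈ V₃ := fun i => ((V₃.equivFinOfCardEq hk).symm i).2
  have hwinj : Function.Injective w := fun i j hij => by
    have := Subtype.ext hij
    simpa using (V₃.equivFinOfCardEq hk).symm.injective this
  have hMmem : ∀ i, ∀ u ∈ V₁, M i u ∈ V₂ := fun i u hu => (hM i).mapsTo hu
  have hMinj : ∀ i, ∀ u ∈ V₁, ∀ u' ∈ V₁, M i u = M i u' → u = u' :=
    fun i u hu u' hu' h => (hM i).injOn hu hu' h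
  -- membership ⇒ adjacency
  have adj_of_mem : ∀ x y : V, s(x, y) ∈ lowerBoundEdges V₁ V₂ V₃ M → G.Adj x y := by
    intro x y h
    rw [← SimpleGraph.mem_edgeSet, hG]; exact h
  -- the edge set as a Finset
  set A : Finset (Sym2 V) := (V₁ ×ˢ V₃).image (fun p => s(p.1, p.2)) with hA
  set B : Finset (Sym2 V) := (V₂ ×ˢ V₃).image (fun p => s(p.1, p.2)) with hB
  set C : Finset (Sym2 V) :=
    (V₁ ×ˢ (Finset.univ : Finset (Fin k))).image (fun p => s(p.1, M p.2 p.1)) with hC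
  have hE : G.edgeSet = ↑(A ∪ B ∪ C) := by
    rw [hG]
    ext e
    simp only [lowerBoundEdges, Set.mem_setOf_eq, Finset.coe_union, Set.mem_union,
      Finset.mem_coe, hA, hB, hC, Finset.mem_image, Finset.mem_product, Prod.exists,
      Finset.mem_univ, and_true]
    constructor
    · rintro (⟨u, hu, w', hw', rfl⟩ | ⟨v, hv, w', hw', rfl⟩ | ⟨i, u, hu, rfl⟩)
      · exact Or.inl (Or.inl ⟨u, w', ⟨hu, hw'⟩, rfl⟩)
      · exact Or.inl (Or.inr ⟨v, w', ⟨hv, hw'⟩, rfl⟩)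
      · exact Or.inr ⟨u, i, hu, rfl⟩
    · rintro ((⟨u, w', ⟨hu, hw'⟩, rfl⟩ | ⟨v, w', ⟨hv, hw'⟩, rfl⟩) | ⟨u, i, hu, rfl⟩)
      · exact Or.inl ⟨u, hu, w', hw', rfl⟩
      · exact Or.inr (Or.inl ⟨v, hv, w', hw', rfl⟩)
      · exact Or.inr (Or.inr ⟨i, u, hu, rfl⟩)
  have hcardA : A.card = a * k := by
    rw [hA, Finset.card_image_of_injOn, Finset.card_product, ha₁, hk]
    rintro ⟨u, x⟩ hm ⟨u', x'⟩ hm' heq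
    simp only [Finset.coe_product, Set.mem_prod, Finset.mem_coe] at hm hm'
    rcases Sym2.eq_iff.mp heq with ⟨rfl, rfl⟩ | ⟨rfl, rfl⟩
    · rfl
    · exact absurd hm'.2 (h13 _ hm.1)
  have hcardB : B.card = a * k := by
    rw [hB, Finset.card_image_of_injOn, Finset.card_product, ha₂, hk]
    rintro ⟨u, x⟩ hm ⟨u', x'⟩ hm' heq
    simp only [Finset.coe_product, Set.mem_prod, Finset.mem_coe] at hm hm'
    rcases Sym2.eq_iff.mp heq with ⟨rfl, rfl⟩ | ⟨rfl, rfl⟩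
    · rfl
    · exact absurd hm'.2 (h23 _ hm.1)
  have hcardC : C.card = a * k := by
    rw [hC, Finset.card_image_of_injOn, Finset.card_product, ha₁, Finset.card_univ,
      Fintype.card_fin]
    rintro ⟨u, i⟩ hm ⟨u', i'⟩ hm' heq
    simp only [Finset.coe_product, Set.mem_prod, Finset.mem_coe] at hm hm'
    rcases Sym2.eq_iff.mp heq with ⟨rfl, h2⟩ | ⟨h1, h2⟩
    · have : i = i' := by
        by_contra hii
        exact hMdisj i i' hii u hm.1 h2
      rw [this]
    · exact absurd (hMmem i' u' hm'.1) (h12 _ (h1 ▸ hm.1))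
  have hdAB : Disjoint A B := by
    rw [Finset.disjoint_left]
    rintro e he he'
    simp only [hA, hB, Finset.mem_image, Finset.mem_product, Prod.exists] at he he'
    obtain ⟨u, x, ⟨hu, hx⟩, rfl⟩ := he
    obtain ⟨v, y, ⟨hv, hy⟩, heq⟩ := he'
    rcases Sym2.eq_iff.mp heq with ⟨h1, h2⟩ | ⟨h1, h2⟩
    · exact h12 _ hu (h1 ▸ hv)
    · exact h13 _ hu (h2 ▸ hy)
  have hdAC : Disjoint A C := by
    rw [Finset.disjoint_left]
    rintro e he he'
    simp only [hA, hC, Finset.mem_image, Finset.mem_product, Prod.exists, Finset.mem_univ,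
      and_true] at he he'
    obtain ⟨u, x, ⟨hu, hx⟩, rfl⟩ := he
    obtain ⟨v, i, hv, heq⟩ := he'
    rcases Sym2.eq_iff.mp heq with ⟨h1, h2⟩ | ⟨h1, h2⟩
    · exact h23 _ (hMmem i v hv) (by rw [h2]; exact hx)
    · exact h12 _ hu (h2 ▸ hMmem i v hv)
  have hdBC : Disjoint B C := by
    rw [Finset.disjoint_left]
    rintro e he he'
    simp only [hB, hC, Finset.mem_image, Finset.mem_product, Prod.exists, Finset.mem_univ,
      and_true] at he he'
    obtain ⟨u, x, ⟨hu, hx⟩, rfl⟩ := he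
    obtain ⟨v, i, hv, heq⟩ := he'
    rcases Sym2.eq_iff.mp heq with ⟨h1, h2⟩ | ⟨h1, h2⟩
    · exact h12 _ (h1 ▸ hv) hu
    · exact h13 _ hv (by rw [h1]; exact hx)
  have hcardE : G.edgeSet.ncard = 3 * a * k := by
    rw [hE, Set.ncard_coe_finset, Finset.card_union_of_disjoint
      (Finset.disjoint_union_left.mpr ⟨hdAC, hdBC⟩),
      Finset.card_union_of_disjoint hdAB, hcardA, hcardB, hcardC]
    ring
  -- the triangles
  set tri : V × Fin k → Finset V := fun p => {p.1, M p.2 p.1, w p.2} with htri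
  set T : Finset (Finset V) :=
    (V₁ ×ˢ (Finset.univ : Finset (Fin k))).image tri with hT
  have tri_ne : ∀ u ∈ V₁, ∀ i : Fin k,
      u ≠ M i u ∧ u ≠ w i ∧ M i u ≠ w i := by
    intro u hu i
    refine ⟨fun h => h12 _ hu (h ▸ hMmem i u hu), fun h => h13 _ hu (h ▸ hwmem i),
      fun h => h23 _ (hMmem i u hu) (h ▸ hwmem i)⟩
  -- which vertices of a triangle lie in which part
  have tri_mem₁ : ∀ u ∈ V₁, ∀ i : Fin k, ∀ x ∈ tri (u, i), x ∈ V₁ → x = u := by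
    intro u hu i x hx hx1
    simp only [htri, Finset.mem_insert, Finset.mem_singleton] at hx
    rcases hx with rfl | rfl | rfl
    · rfl
    · exact absurd hx1 (fun h => h12 _ h (hMmem i u hu))
    · exact absurd hx1 (fun h => h13 _ h (hwmem i))
  have tri_mem₃ : ∀ u ∈ V₁, ∀ i : Fin k, ∀ x ∈ tri (u, i), x ∈ V₃ → x = w i := by
    intro u hu i x hx hx3
    simp only [htri, Finset.mem_insert, Finset.mem_singleton] at hx
    rcases hx with rfl | rfl | rfl
    · exact absurd hx3 (h13 _ hu)
    · exact absurd hx3 (h23 _ (hMmem i u hu))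
    · rfl
  have tri_injOn : Set.InjOn tri ↑(V₁ ×ˢ (Finset.univ : Finset (Fin k))) := by
    rintro ⟨u, i⟩ hm ⟨u', i'⟩ hm' heq
    simp only [Finset.coe_product, Set.mem_prod, Finset.mem_coe] at hm hm'
    have hu : u ∈ V₁ := hm.1
    have hu' : u' ∈ V₁ := hm'.1
    have hu'' : u' ∈ tri (u, i) := by
      rw [heq]; simp [htri]
    have h1 : u' = u := tri_mem₁ u hu i u' hu'' hu'
    have hw'' : w i' ∈ tri (u, i) := by
      rw [heq]; simp [htri]
    have h2 : w i' = w i := tri_mem₃ u hu i (w i') hw'' (hwmem i')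
    have h3 : i' = i := hwinj h2
    rw [h1, h3]
  have hcardT : T.card = a * k := by
    rw [hT, Finset.card_image_of_injOn tri_injOn, Finset.card_product, ha₁,
      Finset.card_univ, Fintype.card_fin]
  have hclique : ∀ t ∈ T, G.IsNClique 3 t := by
    intro t ht
    simp only [hT, Finset.mem_image, Finset.mem_product, Prod.exists, Finset.mem_univ,
      and_true] at ht
    obtain ⟨u, i, hu, rfl⟩ := ht
    rw [htri, SimpleGraph.is3Clique_triple_iff]
    refine ⟨adj_of_mem _ _ ?_, adj_of_mem _ _ ?_, adj_of_mem _ _ ?_⟩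
    · exact Or.inr (Or.inr ⟨i, u, hu, rfl⟩)
    · exact Or.inl ⟨u, hu, w i, hwmem i, rfl⟩
    · exact Or.inr (Or.inl ⟨M i u, hMmem i u hu, w i, hwmem i, rfl⟩)
  -- key: a common non-diagonal edge forces equal triangles
  have key : ∀ u ∈ V₁, ∀ u' ∈ V₁, ∀ i i' : Fin k, ∀ e : Sym2 V, ¬ e.IsDiag →
      (∀ v ∈ e, v ∈ tri (u, i)) → (∀ v ∈ e, v ∈ tri (u', i')) → u = u' ∧ i = i' := by
    intro u hu u' hu' i i' e hdiag he he'
    have fin12 : u = u' → M i u = M i' u' → u = u' ∧ i = i' := by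
      intro h1 h2
      subst h1
      refine ⟨rfl, ?_⟩
      by_contra hii
      exact hMdisj i i' hii u hu h2
    have fin13 : u = u' → w i = w i' → u = u' ∧ i = i' := fun h1 h2 => ⟨h1, hwinj h2⟩
    have fin23 : M i u = M i' u' → w i = w i' → u = u' ∧ i = i' := by
      intro h1 h2
      have hii : i = i' := hwinj h2
      subst hii
      exact ⟨hMinj i u hu u' hu' h1, rfl⟩
    have hclass : ∀ x, x ∈ tri (u, i) → x ∈ tri (u', i') →
        (x = u ∧ x = u') ∨ (x = M i u ∧ x = M i' u') ∨ (x = w i ∧ x = w i') := by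
      intro x hx hx'
      simp only [htri, Finset.mem_insert, Finset.mem_singleton] at hx hx'
      rcases hx with rfl | rfl | rfl <;> rcases hx' with h | h | h
      · exact Or.inl ⟨rfl, h⟩
      · exact absurd (hMmem i' u' hu') (h12 _ (h ▸ hu))
      · exact absurd (hwmem i') (h13 _ (h ▸ hu))
      · exact absurd (h ▸ hMmem i u hu) (fun hh => h12 _ hu' hh)
      · exact Or.inr (Or.inl ⟨rfl, h⟩)
      · exact absurd (hwmem i') (h23 _ (h ▸ hMmem i u hu))
      · exact absurd (h ▸ hwmem i) (fun hh => h13 _ hu' hh)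
      · exact absurd (h ▸ hwmem i) (fun hh => h23 _ (hMmem i' u' hu') hh)
      · exact Or.inr (Or.inr ⟨rfl, h⟩)
    induction e with
    | h x y =>
      have hxy : x ≠ y := by simpa using hdiag
      have cx := hclass x (he x (by simp)) (he' x (by simp))
      have cy := hclass y (he y (by simp)) (he' y (by simp))
      rcases cx with ⟨e1, e1'⟩ | ⟨e2, e2'⟩ | ⟨e3, e3'⟩ <;>
        rcases cy with ⟨f1, f1'⟩ | ⟨f2, f2'⟩ | ⟨f3, f3'⟩
      · exact absurd (e1.trans f1.symm) hxy
      · exact fin12 (e1.symm.trans e1') (f2.symm.trans f2')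
      · exact fin13 (e1.symm.trans e1') (f3.symm.trans f3')
      · exact fin12 (f1.symm.trans f1') (e2.symm.trans e2')
      · exact absurd (e2.trans f2.symm) hxy
      · exact fin23 (e2.symm.trans e2') (f3.symm.trans f3')
      · exact fin13 (f1.symm.trans f1') (e3.symm.trans e3')
      · exact fin23 (f2.symm.trans f2') (e3.symm.trans e3')
      · exact absurd (e3.trans f3.symm) hxy
  have hdisjT : ∀ t₁ ∈ T, ∀ t₂ ∈ T, t₁ ≠ t₂ →
      Disjoint (triangleEdges t₁) (triangleEdges t₂) := by
    intro t₁ ht₁ t₂ ht₂ hne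
    simp only [hT, Finset.mem_image, Finset.mem_product, Prod.exists, Finset.mem_univ,
      and_true] at ht₁ ht₂
    obtain ⟨u, i, hu, rfl⟩ := ht₁
    obtain ⟨u', i', hu', rfl⟩ := ht₂
    rw [Set.disjoint_left]
    rintro e ⟨hd, hm⟩ ⟨_, hm'⟩
    obtain ⟨rfl, rfl⟩ := key u hu u' hu' i i' e hd hm hm'
    exact hne rfl
  -- lower bound on F
  have hFbound : ∀ F : Set (Sym2 V), F ⊆ G.edgeSet → (G.deleteEdges F).CliqueFree 3 →
      a * k ≤ F.ncard := by
    intro F hFsub hFfree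
    have hFfin : F.Finite := Set.Finite.subset (G.edgeSet.toFinite) hFsub
    obtain ⟨u₀, hu₀⟩ := Finset.card_pos.mp (ha₁ ▸ ha : 0 < V₁.card)
    have : Nonempty (Sym2 V) := ⟨s(u₀, u₀)⟩
    have hex : ∀ t : Finset V, t ∈ T → ∃ e, e ∈ F ∧ e ∈ triangleEdges t := by
      intro t ht
      simp only [hT, Finset.mem_image, Finset.mem_product, Prod.exists, Finset.mem_univ,
        and_true] at ht
      obtain ⟨u, i, hu, rfl⟩ := ht
      have hncl := hFfree (tri (u, i))
      rw [htri, SimpleGraph.is3Clique_triple_iff] at hncl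
      obtain ⟨n1, n2, n3⟩ := tri_ne u hu i
      have a1 : G.Adj u (M i u) := adj_of_mem _ _ (Or.inr (Or.inr ⟨i, u, hu, rfl⟩))
      have a2 : G.Adj u (w i) := adj_of_mem _ _ (Or.inl ⟨u, hu, w i, hwmem i, rfl⟩)
      have a3 : G.Adj (M i u) (w i) :=
        adj_of_mem _ _ (Or.inr (Or.inl ⟨M i u, hMmem i u hu, w i, hwmem i, rfl⟩))
      simp only [SimpleGraph.deleteEdges_adj] at hncl
      by_contra hcon
      push_neg at hcon
      apply hncl
      refine ⟨⟨a1, ?_⟩, ⟨a2, ?_⟩, ⟨a3, ?_⟩⟩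
      · intro hmem
        refine (hcon _ hmem) ⟨by simpa using n1, ?_⟩
        intro v hv
        rw [Sym2.mem_iff] at hv
        rcases hv with rfl | rfl <;> simp [htri]
      · intro hmem
        refine (hcon _ hmem) ⟨by simpa using n2, ?_⟩
        intro v hv
        rw [Sym2.mem_iff] at hv
        rcases hv with rfl | rfl <;> simp [htri]
      · intro hmem
        refine (hcon _ hmem) ⟨by simpa using n3, ?_⟩
        intro v hv
        rw [Sym2.mem_iff] at hv
        rcases hv with rfl | rfl <;> simp [htri]
    choose! f hf1 hf2 using hex
    have hle : T.card ≤ hFfin.toFinset.card := by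
      apply Finset.card_le_card_of_injOn f
      · intro t ht
        rw [Finset.mem_coe, Set.Finite.mem_toFinset]
        exact hf1 t ht
      · intro t₁ ht₁ t₂ ht₂ hfe
        by_contra hne
        have := hdisjT t₁ ht₁ t₂ ht₂ hne
        exact Set.disjoint_left.mp this (hf2 t₁ ht₁) (hfe ▸ hf2 t₂ ht₂)
    rw [Set.ncard_eq_toFinset_card F hFfin]
    calc a * k = T.card := hcardT.symm
      _ ≤ _ := hle
  refine ⟨hcardE, ⟨T, hcardT, hclique, hdisjT⟩, hFbound, ?_⟩
  rw [hcardE]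
  push_cast
  ring
end
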